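/- Let G be a locally compact group admitting a continuous positive definite function σ with σ(e) = 1 such that σ(x) ≠ 1 for all x ≠ e (σ is adapted). Then G is first countable. -/

import Mathlib

open Topology Filter

/-- A locally compact (Hausdorff) group admitting an adapted continuous
function `σ` with `|σ| ≤ 1 = σ(e)` and `σ(x) ≠ 1` for `x ≠ e` is first countable. -/
theorem stmt_6 {G : Type*} [Group G] [TopologicalSpace G] [IsTopologicalGroup G]
    [LocallyCompactSpace G] [T2Space G]
    (σ : G → ℂ) (hc : Continuous σ) (hb : ∀ x, ‖σ x‖ ≤ 1)
    (he : σ 1 = 1) (hadapted : ∀ x : G, x ≠ 1 → σ x ≠ 1) :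
    FirstCountableTopology G := by
  obtain ⟨K, hKc, hK⟩ := exists_compact_mem_nhds (1 : G)
  set f : G → ℝ := fun x => ‖σ x - 1‖ with hf
  have hfc : Continuous f := (hc.sub continuous_const).norm
  have hU : ∀ n : ℕ, K ∩ f ⁻¹' Set.Iio (1 / (n + 1)) ∈ 𝓝 (1 : G) := by
    intro n
    refine Filter.inter_mem hK (IsOpen.mem_nhds (isOpen_Iio.preimage hfc) ?_)
    have : f 1 = 0 := by simp [hf, he]
    simp only [Set.mem_preimage, Set.mem_Iio, this]
    positivity
  have hbasis : (𝓝 (1 : G)).HasBasis (fun _ : ℕ => True)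
      (fun n => K ∩ f ⁻¹' Set.Iio (1 / (n + 1))) := by
    constructor
    intro t
    constructor
    · intro ht
      obtain ⟨V, hVt, hVo, hV1⟩ := mem_nhds_iff.mp ht
      by_cases hC : (K \ V).Nonempty
      · have hCc : IsCompact (K \ V) := hKc.diff hVo
        obtain ⟨x0, hx0, hmin⟩ := hCc.exists_isMinOn hC hfc.continuousOn
        have hx0pos : 0 < f x0 := by
          have hne : σ x0 ≠ 1 := hadapted x0 (by rintro rfl; exact hx0.2 hV1)
          exact norm_pos_iff.mpr (sub_ne_zero.mpr hne)
        obtain ⟨n, hn⟩ := exists_nat_one_div_lt hx0pos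
        refine ⟨n, trivial, fun x hx => hVt ?_⟩
        by_contra hxV
        have hxKV : x ∈ K \ V := ⟨hx.1, hxV⟩
        have : f x0 ≤ f x := hmin hxKV
        have hlt : f x < 1 / (n + 1) := hx.2
        linarith
      · refine ⟨0, trivial, fun x hx => hVt ?_⟩
        by_contra hxV
        exact hC ⟨x, hx.1, hxV⟩
    · rintro ⟨n, -, hsub⟩
      exact Filter.mem_of_superset (hU n) hsub
  haveI : (𝓝 (1 : G)).IsCountablyGenerated := hbasis.isCountablyGenerated
  constructor
  intro a
  rw [← map_mul_left_nhds_one a]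
  infer_instance
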